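/- arXiv:2302.14388 — 3 statements merged into one kernel-verified Lean document; each statement's English description precedes it below -/
import Mathlib

section
/- In a partial matching on a simplicial complex, any directed cycle in the modified Hasse diagram (matched pairs oriented upward, unmatched cover relations downward) must alternate strictly between two adjacent dimensions, i.e., it has the form σ_1 ↘ τ_1 ↗ σ_2 ↘ τ_2 ↗ ⋯ ↗ σ_1 with all σ_i of dimension d+1 and all τ_i of dimension d. -/
variable {V : Type*} [DecidableEq V]

/-- `σ` is a facet (codimension-one face) of `τ`. -/
def IsFacet (σ τ : Finset V) : Prop := σ ⊆ τ ∧ τ.card = σ.card + 1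

/-- `M` is a partial matching on the simplicial complex `C`: matched pairs are
facet/cofacet pairs of simplices of `C`, and every simplex is matched with at most
one facet or cofacet. -/
structure IsPartialMatching (C : Set (Finset V)) (M : Finset V → Finset V → Prop) : Prop where
  mem_left : ∀ σ τ, M σ τ → σ ∈ C
  mem_right : ∀ σ τ, M σ τ → τ ∈ C
  facet : ∀ σ τ, M σ τ → IsFacet σ τ
  unique : ∀ σ τ₁ τ₂, (M σ τ₁ ∨ M τ₁ σ) → (M σ τ₂ ∨ M τ₂ σ) → τ₁ = τ₂

/-- One step of the modified Hasse diagram: either go up along a matched pair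
(`σ ↗ τ`), or go down along an unmatched cover relation (`σ ↘ τ`). -/
def MorseStep (C : Set (Finset V)) (M : Finset V → Finset V → Prop)
    (σ τ : Finset V) : Prop :=
  (σ ∈ C ∧ τ ∈ C) ∧ (M σ τ ∨ (IsFacet τ σ ∧ ¬ M τ σ))

/-- any directed cycle in the modified Hasse diagram of a partial
matching alternates strictly between two adjacent dimensions: there is `d` such
that every simplex on the cycle has cardinality `d` or `d+1`, and consecutive
simplices on the cycle have different cardinalities (so the cycle has the form
`σ₁ ↘ τ₁ ↗ σ₂ ↘ ⋯ ↗ σ₁` with the `σᵢ` of dimension `d+1` and the `τᵢ` of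
dimension `d`). -/
theorem cycle_alternates_adjacent_dimensions
    (C : Set (Finset V)) (M : Finset V → Finset V → Prop)
    (hM : IsPartialMatching C M)
    (p : ℕ → Finset V) (k : ℕ) (hk : 0 < k)
    (hstep : ∀ i, MorseStep C M (p i) (p (i + 1)))
    (hper : ∀ i, p (i + k) = p i) :
    ∃ d : ℕ, ∀ i, ((p i).card = d ∨ (p i).card = d + 1) ∧
      (p i).card ≠ (p (i + 1)).card := by

  -- each step changes cardinality by exactly one
  have hdiff : ∀ i, (p (i+1)).card = (p i).card + 1 ∨ (p i).card = (p (i+1)).card + 1 := by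
    intro i
    rcases (hstep i).2 with hu | ⟨hf, _⟩
    · exact Or.inl (hM.facet _ _ hu).2
    · exact Or.inr hf.2
  -- key: either the cycle alternates at i, or the "energy" drops by 2
  have key : ∀ i, (p (i+2)).card = (p i).card ∨
      (p i).card + (p (i+1)).card = ((p (i+1)).card + (p (i+2)).card) + 2 := by
    intro i
    have h1 := (hstep i).2
    have h2 := (hstep (i+1)).2
    have e : i + 1 + 1 = i + 2 := rfl
    rw [e] at h2
    rcases h1 with hu1 | ⟨hf1, _⟩
    · rcases h2 with hu2 | ⟨hf2, _⟩
      · -- two consecutive up steps: impossible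
        have heq := hM.unique (p (i+1)) (p i) (p (i+2)) (Or.inr hu1) (Or.inl hu2)
        have c1 := (hM.facet _ _ hu1).2
        have c2 := (hM.facet _ _ hu2).2
        rw [← heq] at c2
        omega
      · have c1 := (hM.facet _ _ hu1).2
        have c2 := hf2.2
        omega
    · rcases h2 with hu2 | ⟨hf2, _⟩
      · have c1 := hf1.2
        have c2 := (hM.facet _ _ hu2).2
        omega
      · have c1 := hf1.2
        have c2 := hf2.2
        omega
  -- energy function
  set g : ℕ → ℕ := fun i => (p i).card + (p (i+1)).card with hg
  have hdec : ∀ i, g (i+1) ≤ g i := by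
    intro i
    have e : (p (i+1+1)).card = (p (i+2)).card := rfl
    rcases key i with h | h <;> simp only [hg] <;> omega
  have hanti : Antitone g := antitone_nat_of_succ_le hdec
  have hgper : ∀ i, g (i + k) = g i := by
    intro i
    simp only [hg]
    have h1 := hper i
    have h2 := hper (i+1)
    have e : i + k + 1 = i + 1 + k := by omega
    rw [e, h1, h2]
  have heq : ∀ i, g (i+1) = g i := by
    intro i
    refine le_antisymm (hdec i) ?_
    have : g (i + k) ≤ g (i+1) := hanti (by omega)
    rw [hgper i] at this
    exact this
  have h2step : ∀ i, (p (i+2)).card = (p i).card := by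
    intro i
    rcases key i with h | h
    · exact h
    · have := heq i
      have e : (p (i+1+1)).card = (p (i+2)).card := rfl
      simp only [hg] at this
      omega
  -- all values are (p 0).card or (p 1).card
  have hvals : ∀ i, (p i).card = (p 0).card ∨ (p i).card = (p 1).card := by
    intro i
    induction i using Nat.twoStepInduction with
    | zero => exact Or.inl rfl
    | one => exact Or.inr rfl
    | more n ih _ =>
      have := h2step n
      rcases ih with h | h
      · exact Or.inl (by omega)
      · exact Or.inr (by omega)
  refine ⟨min (p 0).card (p 1).card, fun i => ?_⟩
  have h0 := hdiff 0
  have hi := hdiff i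
  have v1 := hvals i
  have v2 := hvals (i+1)
  constructor <;> omega
end

section
/- Any triangulation (without additional vertices) of a convex polygon can be transformed into any other such triangulation by a finite sequence of diagonal flips, where a flip replaces a diagonal of a triangulated quadrilateral formed by two adjacent triangles with the other diagonal. -/
/-- `p` is a diagonal of a convex `n`-gon with vertices `0, 1, …, n-1` in cyclic
order: a pair `(i, j)` with `i + 2 ≤ j < n` which is not an edge of the polygon
(the pair `(0, n-1)` is the remaining boundary edge and is excluded). -/
def IsDiagonal (n : ℕ) (p : ℕ × ℕ) : Prop :=
  p.1 + 2 ≤ p.2 ∧ p.2 < n ∧ ¬(p.1 = 0 ∧ p.2 = n - 1)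

/-- Two diagonals of the convex polygon cross (their interiors intersect). -/
def Crosses (p q : ℕ × ℕ) : Prop :=
  (p.1 < q.1 ∧ q.1 < p.2 ∧ p.2 < q.2) ∨ (q.1 < p.1 ∧ p.1 < q.2 ∧ q.2 < p.2)

/-- A triangulation (without additional vertices) of a convex `n`-gon, identified
with its set of diagonals: a maximal set of pairwise noncrossing diagonals. -/
def IsTriangulation (n : ℕ) (D : Finset (ℕ × ℕ)) : Prop :=
  (∀ p ∈ D, IsDiagonal n p) ∧
  (∀ p ∈ D, ∀ q ∈ D, ¬ Crosses p q) ∧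
  (∀ p, IsDiagonal n p → (∀ q ∈ D, ¬ Crosses p q) → p ∈ D)

/-- A diagonal flip: remove one diagonal of the triangulation (exposing the
quadrilateral formed by the two adjacent triangles) and insert the other diagonal
of that quadrilateral, i.e. the unique other diagonal producing a triangulation. -/
def Flip (n : ℕ) (D D' : Finset (ℕ × ℕ)) : Prop :=
  IsTriangulation n D ∧ IsTriangulation n D' ∧
  ∃ d d', d ∈ D ∧ d' ∉ D ∧ D' = insert d' (D.erase d)

lemma crosses_mk {p1 p2 q1 q2 : ℕ} :
    Crosses (p1, p2) (q1, q2) ↔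
      ((p1 < q1 ∧ q1 < p2 ∧ p2 < q2) ∨ (q1 < p1 ∧ p1 < q2 ∧ q2 < p2)) := Iff.rfl

lemma crosses_symm {p q : ℕ × ℕ} (h : Crosses p q) : Crosses q p := by
  rcases h with ⟨h1, h2, h3⟩ | ⟨h1, h2, h3⟩
  · exact Or.inr ⟨h1, h2, h3⟩
  · exact Or.inl ⟨h1, h2, h3⟩

/-- The fan triangulation at vertex `0`. -/
def Fan (n : ℕ) : Finset (ℕ × ℕ) := (Finset.Ico 2 (n - 1)).image (fun j => (0, j))

lemma flip_symm {n : ℕ} {D D' : Finset (ℕ × ℕ)} (h : Flip n D D') : Flip n D' D := by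
  obtain ⟨h1, h2, d, d', hd, hd', hD'⟩ := h
  have hd'e : d' ∉ D.erase d := fun hmem => hd' (Finset.mem_of_mem_erase hmem)
  refine ⟨h2, h1, d', d, ?_, ?_, ?_⟩
  · rw [hD']; exact Finset.mem_insert_self _ _
  · rw [hD']
    simp only [Finset.mem_insert, Finset.mem_erase]
    rintro (rfl | ⟨hne, _⟩)
    · exact hd' hd
    · exact hne rfl
  · rw [hD', Finset.erase_insert hd'e, Finset.insert_erase hd]

lemma eq_fan {n : ℕ} {D : Finset (ℕ × ℕ)} (hD : IsTriangulation n D)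
    (h : ∀ p ∈ D, p.1 = 0) : D = Fan n := by
  obtain ⟨hDd, hDc, hDm⟩ := hD
  ext ⟨u, v⟩
  simp only [Fan, Finset.mem_image, Finset.mem_Ico, Prod.mk.injEq]
  constructor
  · intro hmem
    have h0 : u = 0 := h _ hmem
    have h1 : u + 2 ≤ v := (hDd _ hmem).1
    have h2 : v < n := (hDd _ hmem).2.1
    have h3 : ¬(u = 0 ∧ v = n - 1) := (hDd _ hmem).2.2
    exact ⟨v, ⟨by omega, by omega⟩, h0.symm, rfl⟩
  · rintro ⟨j, ⟨hj1, hj2⟩, hu, hv⟩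
    apply hDm
    · exact ⟨by omega, by omega, by omega⟩
    · intro q hq hcr
      obtain ⟨w, z⟩ := q
      have hw : w = 0 := h _ hq
      rcases crosses_mk.mp hcr with hh | hh <;> omega

lemma exists_flip {n : ℕ} {D : Finset (ℕ × ℕ)} (hD : IsTriangulation n D)
    {x y : ℕ} (hxyD : (x, y) ∈ D) (hx0 : x ≠ 0) :
    ∃ D', Flip n D D' ∧
      (D'.filter (fun p => p.1 ≠ 0)).card < (D.filter (fun p => p.1 ≠ 0)).card := by
  classical
  obtain ⟨hDd, hDc, hDm⟩ := hD
  have hxy2 : x + 2 ≤ y := (hDd _ hxyD).1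
  have hyn : y < n := (hDd _ hxyD).2.1
  have hx1 : 1 ≤ x := Nat.one_le_iff_ne_zero.mpr hx0
  have hvn : ∀ u v : ℕ, (u, v) ∈ D → u + 2 ≤ v ∧ v < n :=
    fun u v hm => ⟨(hDd _ hm).1, (hDd _ hm).2.1⟩
  set E : ℕ → Prop := fun j => j = 1 ∨ j = n - 1 ∨ (0, j) ∈ D with hEdef
  have hE1 : E 1 := Or.inl rfl
  have hEn : E (n - 1) := Or.inr (Or.inl rfl)
  -- no `E`-vertex strictly between x and y
  have hnoE : ∀ j, x < j → j < y → ¬ E j := by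
    intro j h1 h2 hEj
    rcases hEj with hh | hh | hh
    · omega
    · omega
    · exact hDc _ hxyD _ hh (crosses_mk.mpr (by omega))
  -- a : greatest E-vertex ≤ x
  obtain ⟨a, hEa, hax, ha1, ha_max⟩ :
      ∃ a, E a ∧ a ≤ x ∧ 1 ≤ a ∧ ∀ j, a < j → j ≤ x → ¬ E j := by
    refine ⟨Nat.findGreatest E x, Nat.findGreatest_spec hx1 hE1, Nat.findGreatest_le x,
      Nat.le_findGreatest hx1 hE1, fun j hj1 hj2 => Nat.findGreatest_is_greatest hj1 hj2⟩
  -- b : least E-vertex ≥ y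
  obtain ⟨b, hyb, hEb, hbn, hb_min⟩ :
      ∃ b, y ≤ b ∧ E b ∧ b ≤ n - 1 ∧ ∀ j, j < b → ¬(y ≤ j ∧ E j) := by
    have hex : ∃ j, y ≤ j ∧ E j := ⟨n - 1, by omega, hEn⟩
    refine ⟨Nat.find hex, (Nat.find_spec hex).1, (Nat.find_spec hex).2, ?_,
      fun j hj => Nat.find_min hex hj⟩
    by_contra hcon
    exact Nat.find_min hex (by omega) ⟨by omega, hEn⟩
  have hab2 : a + 2 ≤ b := by omega
  -- no E-vertex strictly between a and b
  have hgap : ∀ j, a < j → j < b → ¬ E j := by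
    intro j h1 h2 hEj
    rcases le_or_gt j x with hh | hh
    · exact ha_max j h1 hh hEj
    · rcases lt_or_ge j y with hh' | hh'
      · exact hnoE j hh hh' hEj
      · exact hb_min j h2 ⟨hh', hEj⟩
  have hnN : ∀ j, a < j → j < b → (0, j) ∉ D := fun j h1 h2 hj =>
    hgap j h1 h2 (Or.inr (Or.inr hj))
  have h0a : 1 < a → (0, a) ∈ D := by
    intro hh
    rcases hEa with h' | h' | h'
    · omega
    · omega
    · exact h'
  have h0b : b < n - 1 → (0, b) ∈ D := by
    intro hh
    rcases hEb with h' | h' | h'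
    · omega
    · omega
    · exact h'
  -- crossing eliminators
  have hX0a : ∀ u v : ℕ, (u, v) ∈ D → ¬(0 < u ∧ u < a ∧ a < v) := by
    rintro u v huv ⟨g1, g2, g3⟩
    exact hDc _ (h0a (by omega)) _ huv (crosses_mk.mpr (by omega))
  have hX0b : ∀ u v : ℕ, (u, v) ∈ D → ¬(0 < u ∧ u < b ∧ b < v) := by
    rintro u v huv ⟨g1, g2, g3⟩
    have hv := (hvn u v huv).2
    exact hDc _ (h0b (by omega)) _ huv (crosses_mk.mpr (by omega))
  -- (a, b) is a diagonal of the triangulation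
  have habD : (a, b) ∈ D := by
    apply hDm
    · exact ⟨hab2, by omega, by omega⟩
    · rintro ⟨u, v⟩ huv hcr
      rcases crosses_mk.mp hcr with ⟨g1, g2, g3⟩ | ⟨g1, g2, g3⟩
      · exact hX0b u v huv ⟨by omega, g2, g3⟩
      · rcases Nat.eq_zero_or_pos u with rfl | hu
        · exact hnN v g2 g3 huv
        · exact hX0a u v huv ⟨hu, g1, g2⟩
  -- c : the apex of the triangle on the inner side of (a, b)
  obtain ⟨c, hac, hcb, hcE, hc_min⟩ :
      ∃ c, a < c ∧ c < b ∧ (c = b - 1 ∨ (c, b) ∈ D) ∧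
        ∀ e, e < c → ¬(a < e ∧ e < b ∧ (e = b - 1 ∨ (e, b) ∈ D)) := by
    have hex : ∃ e, a < e ∧ e < b ∧ (e = b - 1 ∨ (e, b) ∈ D) :=
      ⟨b - 1, by omega, by omega, Or.inl rfl⟩
    exact ⟨Nat.find hex, (Nat.find_spec hex).1, (Nat.find_spec hex).2.1,
      (Nat.find_spec hex).2.2, fun e he => Nat.find_min hex he⟩
  have hcbD : c < b - 1 → (c, b) ∈ D := by
    intro hh
    rcases hcE with h' | h'
    · omega
    · exact h'
  have hXcb : ∀ u v : ℕ, (u, v) ∈ D → ¬(u < c ∧ c < v ∧ v < b) := by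
    rintro u v huv ⟨g1, g2, g3⟩
    exact hDc _ (hcbD (by omega)) _ huv (crosses_mk.mpr (by omega))
  have h0cD : (0, c) ∉ D := hnN c hac hcb
  have hacD : a + 2 ≤ c → (a, c) ∈ D := by
    intro h2c
    apply hDm
    · exact ⟨h2c, by omega, by omega⟩
    · rintro ⟨u, v⟩ huv hcr
      rcases crosses_mk.mp hcr with ⟨g1, g2, g3⟩ | ⟨g1, g2, g3⟩
      · rcases lt_trichotomy v b with hv | hv | hv
        · exact hXcb u v huv ⟨g2, g3, hv⟩
        · exact hc_min u g2 ⟨g1, by omega, Or.inr (by rw [← hv]; exact huv)⟩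
        · exact hDc _ habD _ huv (crosses_mk.mpr (by omega))
      · rcases Nat.eq_zero_or_pos u with rfl | hu
        · exact hnN v g2 (by omega) huv
        · exact hX0a u v huv ⟨hu, g1, g2⟩
  -- (0, c) crosses nothing in D except (a, b)
  have hkey : ∀ u v : ℕ, (u, v) ∈ D → (u, v) ≠ (a, b) → ¬ Crosses (0, c) (u, v) := by
    intro u v huv hne hcr
    rcases crosses_mk.mp hcr with ⟨g1, g2, g3⟩ | ⟨g1, g2, g3⟩
    · rcases lt_trichotomy v b with hv | hv | hv
      · exact hXcb u v huv ⟨g2, g3, hv⟩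
      · rcases lt_trichotomy u a with hu | hu | hu
        · exact hX0a u v huv ⟨g1, hu, by omega⟩
        · exact hne (by rw [hu, hv])
        · exact hc_min u g2 ⟨hu, by omega, Or.inr (by rw [← hv]; exact huv)⟩
      · rcases lt_trichotomy u a with hu | hu | hu
        · exact hX0a u v huv ⟨g1, hu, by omega⟩
        · exact hX0b u v huv ⟨by omega, by omega, hv⟩
        · exact hDc _ habD _ huv (crosses_mk.mpr (by omega))
    · omega
  refine ⟨insert (0, c) (D.erase (a, b)),
    ⟨⟨hDd, hDc, hDm⟩, ⟨?_, ?_, ?_⟩, (a, b), (0, c), habD, h0cD, rfl⟩, ?_⟩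
  -- all elements are diagonals
  · intro p hp
    rcases Finset.mem_insert.mp hp with rfl | hp'
    · exact ⟨by omega, by omega, by omega⟩
    · exact hDd _ (Finset.mem_of_mem_erase hp')
  -- pairwise noncrossing
  · intro p hp q hq
    rcases Finset.mem_insert.mp hp with rfl | hp'
    · rcases Finset.mem_insert.mp hq with rfl | hq'
      · intro hcr
        rcases crosses_mk.mp hcr with hh | hh <;> omega
      · obtain ⟨u, v⟩ := q
        exact hkey u v (Finset.mem_of_mem_erase hq') (Finset.ne_of_mem_erase hq')
    · rcases Finset.mem_insert.mp hq with rfl | hq'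
      · obtain ⟨u, v⟩ := p
        exact fun hcr =>
          hkey u v (Finset.mem_of_mem_erase hp') (Finset.ne_of_mem_erase hp') (crosses_symm hcr)
      · exact hDc _ (Finset.mem_of_mem_erase hp') _ (Finset.mem_of_mem_erase hq')
  -- maximality
  · rintro ⟨u, v⟩ hpd hnc
    have hnc0c : ¬ Crosses (u, v) (0, c) := hnc _ (Finset.mem_insert_self _ _)
    have hncD : ∀ w z : ℕ, (w, z) ∈ D → (w, z) ≠ (a, b) → ¬ Crosses (u, v) (w, z) := by
      intro w z hw hne
      exact hnc _ (Finset.mem_insert_of_mem (Finset.mem_erase.mpr ⟨hne, hw⟩))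
    by_cases hcab : Crosses (u, v) (a, b)
    · rcases crosses_mk.mp hcab with ⟨g1, g2, g3⟩ | ⟨g1, g2, g3⟩
      · -- u < a ∧ a < v ∧ v < b : here (u,v) must be (0,c)
        have hu0 : u = 0 := by
          by_contra hu
          exact hncD 0 a (h0a (by omega))
            (by simp only [ne_eq, Prod.mk.injEq, not_and]; omega)
            (crosses_mk.mpr (by omega))
        subst hu0
        rcases lt_trichotomy v c with hv | hv | hv
        · exfalso
          exact hncD a c (hacD (by omega))
            (by simp only [ne_eq, Prod.mk.injEq, not_and]; omega)
            (crosses_mk.mpr (by omega))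
        · rw [hv]; exact Finset.mem_insert_self _ _
        · exfalso
          exact hncD c b (hcbD (by omega))
            (by simp only [ne_eq, Prod.mk.injEq, not_and]; omega)
            (crosses_mk.mpr (by omega))
      · -- a < u ∧ u < b ∧ b < v : impossible
        exfalso
        have hvn' : v < n := hpd.2.1
        exact hncD 0 b (h0b (by omega))
          (by simp only [ne_eq, Prod.mk.injEq, not_and]; omega)
          (crosses_mk.mpr (by omega))
    · -- (u, v) crosses nothing in D, hence is in D already
      have hpD : (u, v) ∈ D := by
        apply hDm _ hpd
        intro q hq
        obtain ⟨w, z⟩ := q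
        rcases eq_or_ne (w, z) ((a : ℕ), (b : ℕ)) with heq | hne
        · rw [heq]; exact hcab
        · exact hncD w z hq hne
      have hne : (u, v) ≠ (a, b) := by
        intro heq
        exact hnc0c (by rw [heq]; exact crosses_mk.mpr (by omega))
      exact Finset.mem_insert_of_mem (Finset.mem_erase.mpr ⟨hne, hpD⟩)
  -- the measure decreases
  · have hfilter : (insert (0, c) (D.erase (a, b))).filter (fun p => p.1 ≠ 0)
        = (D.filter (fun p => p.1 ≠ 0)).erase (a, b) := by
      rw [Finset.filter_insert, if_neg (by simp), Finset.filter_erase]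
    rw [hfilter]
    have hmemf : (a, b) ∈ D.filter (fun p => p.1 ≠ 0) :=
      Finset.mem_filter.mpr ⟨habD, by show a ≠ 0; omega⟩
    rw [Finset.card_erase_of_mem hmemf]
    have hpos : 0 < (D.filter (fun p => p.1 ≠ 0)).card := Finset.card_pos.mpr ⟨_, hmemf⟩
    omega

lemma toFan (n : ℕ) (D : Finset (ℕ × ℕ)) (hD : IsTriangulation n D) :
    Relation.ReflTransGen (Flip n) D (Fan n) := by
  classical
  suffices H : ∀ m (D : Finset (ℕ × ℕ)), IsTriangulation n D →
      (D.filter (fun p => p.1 ≠ 0)).card = m →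
      Relation.ReflTransGen (Flip n) D (Fan n) from H _ D hD rfl
  intro m
  induction m using Nat.strong_induction_on with
  | _ m ih =>
    intro D hD hm
    by_cases hall : ∀ p ∈ D, p.1 = 0
    · rw [eq_fan hD hall]
    · push_neg at hall
      obtain ⟨p, hp, hp0⟩ := hall
      obtain ⟨u, v⟩ := p
      obtain ⟨D', hflip, hlt⟩ := exists_flip hD hp hp0
      exact Relation.ReflTransGen.head hflip (ih _ (hm ▸ hlt) D' hflip.2.1 rfl)

/-- Wagner: any two triangulations of a convex polygon (using no
additional vertices) are connected by a finite sequence of diagonal flips. -/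
theorem triangulations_flip_connected (n : ℕ) (D D' : Finset (ℕ × ℕ))
    (hD : IsTriangulation n D) (hD' : IsTriangulation n D') :
    Relation.ReflTransGen (Flip n) D D' := by
  have hsymm : Symmetric (Flip n) := fun _ _ h => flip_symm h
  exact (toFan n D hD).trans ((@Relation.ReflTransGen.stdSymm _ (Flip n) ⟨hsymm⟩).symm _ _ (toFan n D' hD'))
end

section
/- With b_n := 2·f_n^3 − ẽ_n^2 where f_n^3 = binomial(n,3) 2^{n-3} and ẽ_n^2 = (χ(C_n^{(2)}) − 1) = f_n^0 − f_n^1 + f_n^2 − 1, the generating function Σ_{n≥0} b_n x^n equals x^3 / ((1−x)(1−2x)^4), and moreover b_n = ẽ_{n+1}^3 for all n ≥ 0, where ẽ_{n+1}^3 = −(χ(C_{n+1}^{(3)}) − 1) = −(f_{n+1}^0 − f_{n+1}^1 + f_{n+1}^2 − f_{n+1}^3 − 1). -/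
/-- `f_n^k = C(n,k)·2^{n-k}`, the number of `k`-faces of the `n`-cube. -/
def cubeF (n k : ℕ) : ℤ := (n.choose k * 2 ^ (n - k) : ℕ)

/-- `ẽ_n^k = (-1)^k (Σ_{j=0}^k (-1)^j f_n^j - 1)`, the suitably signed reduced Euler
characteristic of the `k`-skeleton of the `n`-cube. -/
def etilde (n k : ℕ) : ℤ :=
  (-1) ^ k * ((∑ j ∈ Finset.range (k + 1), (-1) ^ j * cubeF n j) - 1)

/-- `b_n = 2·f_n^3 − ẽ_n^2`. -/
def bSeq (n : ℕ) : ℤ := 2 * cubeF n 3 - etilde n 2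

lemma choose2 (n : ℕ) : (n.choose 2 : ℤ) * 2 = n * (n - 1) := by
  induction n with
  | zero => decide
  | succ k ih =>
    rw [Nat.choose_succ_succ]
    push_cast [Nat.choose_one_right] at ih ⊢
    linarith

lemma choose3 (n : ℕ) : (n.choose 3 : ℤ) * 6 = n * (n - 1) * (n - 2) := by
  induction n with
  | zero => decide
  | succ k ih =>
    rw [Nat.choose_succ_succ]
    have h2 := choose2 k
    push_cast at ih ⊢
    nlinarith [h2, ih]

lemma bSeq_eq (m : ℕ) :
    bSeq (m + 3) * 3 = 2 ^ m * ((m : ℤ) ^ 3 + 3 * m ^ 2 + 8 * m) + 3 := by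
  have h2 := choose2 (m + 3)
  have h3 := choose3 (m + 3)
  simp only [bSeq, etilde, cubeF, Finset.sum_range_succ, Finset.sum_range_zero]
  have e3 : m + 3 - 3 = m := by omega
  rw [show m + 3 - 0 = m + 3 from rfl, show m + 3 - 1 = m + 2 from rfl,
    show m + 3 - 2 = m + 1 from rfl, e3]
  push_cast [Nat.choose_zero_right, Nat.choose_one_right] at h2 h3 ⊢
  linear_combination (2 ^ m : ℤ) * h3 - 3 * (2 ^ m : ℤ) * h2

lemma bSeq_q (m : ℕ) :
    (bSeq (m + 3) : ℚ) = (2 ^ m * ((m : ℚ) ^ 3 + 3 * m ^ 2 + 8 * m) + 3) / 3 := by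
  have h := bSeq_eq m
  have h' : (bSeq (m + 3) : ℚ) * 3 = 2 ^ m * ((m : ℚ) ^ 3 + 3 * m ^ 2 + 8 * m) + 3 := by
    exact_mod_cast congrArg (Int.cast : ℤ → ℚ) h
  field_simp
  linarith

open PowerSeries in
/-- the generating function `Σ_{n≥0} b_n xⁿ` equals
`x³ / ((1−x)(1−2x)⁴)` in `ℚ[[x]]` (stated with cleared denominators), and moreover
`b_n = ẽ_{n+1}^3` for all `n ≥ 0`. -/
theorem bSeq_generating_function :
    ((1 - X) * (1 - 2 * X) ^ 4 * PowerSeries.mk (fun n => (bSeq n : ℚ))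
      = (X : PowerSeries ℚ) ^ 3) ∧
    (∀ n : ℕ, bSeq n = etilde (n + 1) 3) := by
  constructor
  · have expand : (1 - X) * (1 - 2 * X) ^ 4 * (PowerSeries.mk fun n => (bSeq n : ℚ))
        = (PowerSeries.mk fun n => (bSeq n : ℚ))
          - (C (9:ℚ)) * (X ^ 1 * (PowerSeries.mk fun n => (bSeq n : ℚ)))
          + (C (32:ℚ)) * (X ^ 2 * (PowerSeries.mk fun n => (bSeq n : ℚ)))
          - (C (56:ℚ)) * (X ^ 3 * (PowerSeries.mk fun n => (bSeq n : ℚ)))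
          + (C (48:ℚ)) * (X ^ 4 * (PowerSeries.mk fun n => (bSeq n : ℚ)))
          - (C (16:ℚ)) * (X ^ 5 * (PowerSeries.mk fun n => (bSeq n : ℚ))) := by
      have a : (C (9:ℚ) : ℚ⟦X⟧) = 9 := by simp [map_ofNat]
      have b : (C (32:ℚ) : ℚ⟦X⟧) = 32 := by simp [map_ofNat]
      have c : (C (56:ℚ) : ℚ⟦X⟧) = 56 := by simp [map_ofNat]
      have d : (C (48:ℚ) : ℚ⟦X⟧) = 48 := by simp [map_ofNat]
      have e : (C (16:ℚ) : ℚ⟦X⟧) = 16 := by simp [map_ofNat]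
      rw [a, b, c, d, e]; ring
    rw [expand]
    ext n
    simp only [map_sub, map_add, coeff_C_mul, coeff_X_pow_mul', PowerSeries.coeff_mk,
      coeff_X_pow]
    match n with
    | 0 => norm_num [bSeq, etilde, cubeF, Finset.sum_range_succ, show (0:ℕ).choose 1 = 0 from rfl, show (0:ℕ).choose 2 = 0 from rfl, show (1:ℕ).choose 3 = 0 from rfl, show (2:ℕ).choose 3 = 0 from rfl, show (4:ℕ).choose 2 = 6 from rfl, show (4:ℕ).choose 3 = 4 from rfl, show (5:ℕ).choose 2 = 10 from rfl, show (5:ℕ).choose 3 = 10 from rfl, show (6:ℕ).choose 2 = 15 from rfl, show (6:ℕ).choose 3 = 20 from rfl, show (7:ℕ).choose 2 = 21 from rfl, show (7:ℕ).choose 3 = 35 from rfl]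
    | 1 => norm_num [bSeq, etilde, cubeF, Finset.sum_range_succ, show (0:ℕ).choose 1 = 0 from rfl, show (0:ℕ).choose 2 = 0 from rfl, show (1:ℕ).choose 3 = 0 from rfl, show (2:ℕ).choose 3 = 0 from rfl, show (4:ℕ).choose 2 = 6 from rfl, show (4:ℕ).choose 3 = 4 from rfl, show (5:ℕ).choose 2 = 10 from rfl, show (5:ℕ).choose 3 = 10 from rfl, show (6:ℕ).choose 2 = 15 from rfl, show (6:ℕ).choose 3 = 20 from rfl, show (7:ℕ).choose 2 = 21 from rfl, show (7:ℕ).choose 3 = 35 from rfl]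
    | 2 => norm_num [bSeq, etilde, cubeF, Finset.sum_range_succ, show (0:ℕ).choose 1 = 0 from rfl, show (0:ℕ).choose 2 = 0 from rfl, show (1:ℕ).choose 3 = 0 from rfl, show (2:ℕ).choose 3 = 0 from rfl, show (4:ℕ).choose 2 = 6 from rfl, show (4:ℕ).choose 3 = 4 from rfl, show (5:ℕ).choose 2 = 10 from rfl, show (5:ℕ).choose 3 = 10 from rfl, show (6:ℕ).choose 2 = 15 from rfl, show (6:ℕ).choose 3 = 20 from rfl, show (7:ℕ).choose 2 = 21 from rfl, show (7:ℕ).choose 3 = 35 from rfl]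
    | 3 => norm_num [bSeq, etilde, cubeF, Finset.sum_range_succ, show (0:ℕ).choose 1 = 0 from rfl, show (0:ℕ).choose 2 = 0 from rfl, show (1:ℕ).choose 3 = 0 from rfl, show (2:ℕ).choose 3 = 0 from rfl, show (4:ℕ).choose 2 = 6 from rfl, show (4:ℕ).choose 3 = 4 from rfl, show (5:ℕ).choose 2 = 10 from rfl, show (5:ℕ).choose 3 = 10 from rfl, show (6:ℕ).choose 2 = 15 from rfl, show (6:ℕ).choose 3 = 20 from rfl, show (7:ℕ).choose 2 = 21 from rfl, show (7:ℕ).choose 3 = 35 from rfl]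
    | 4 => norm_num [bSeq, etilde, cubeF, Finset.sum_range_succ, show (0:ℕ).choose 1 = 0 from rfl, show (0:ℕ).choose 2 = 0 from rfl, show (1:ℕ).choose 3 = 0 from rfl, show (2:ℕ).choose 3 = 0 from rfl, show (4:ℕ).choose 2 = 6 from rfl, show (4:ℕ).choose 3 = 4 from rfl, show (5:ℕ).choose 2 = 10 from rfl, show (5:ℕ).choose 3 = 10 from rfl, show (6:ℕ).choose 2 = 15 from rfl, show (6:ℕ).choose 3 = 20 from rfl, show (7:ℕ).choose 2 = 21 from rfl, show (7:ℕ).choose 3 = 35 from rfl]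
    | 5 => norm_num [bSeq, etilde, cubeF, Finset.sum_range_succ, show (0:ℕ).choose 1 = 0 from rfl, show (0:ℕ).choose 2 = 0 from rfl, show (1:ℕ).choose 3 = 0 from rfl, show (2:ℕ).choose 3 = 0 from rfl, show (4:ℕ).choose 2 = 6 from rfl, show (4:ℕ).choose 3 = 4 from rfl, show (5:ℕ).choose 2 = 10 from rfl, show (5:ℕ).choose 3 = 10 from rfl, show (6:ℕ).choose 2 = 15 from rfl, show (6:ℕ).choose 3 = 20 from rfl, show (7:ℕ).choose 2 = 21 from rfl, show (7:ℕ).choose 3 = 35 from rfl]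
    | 6 => norm_num [bSeq, etilde, cubeF, Finset.sum_range_succ, show (0:ℕ).choose 1 = 0 from rfl, show (0:ℕ).choose 2 = 0 from rfl, show (1:ℕ).choose 3 = 0 from rfl, show (2:ℕ).choose 3 = 0 from rfl, show (4:ℕ).choose 2 = 6 from rfl, show (4:ℕ).choose 3 = 4 from rfl, show (5:ℕ).choose 2 = 10 from rfl, show (5:ℕ).choose 3 = 10 from rfl, show (6:ℕ).choose 2 = 15 from rfl, show (6:ℕ).choose 3 = 20 from rfl, show (7:ℕ).choose 2 = 21 from rfl, show (7:ℕ).choose 3 = 35 from rfl]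
    | 7 => norm_num [bSeq, etilde, cubeF, Finset.sum_range_succ, show (0:ℕ).choose 1 = 0 from rfl, show (0:ℕ).choose 2 = 0 from rfl, show (1:ℕ).choose 3 = 0 from rfl, show (2:ℕ).choose 3 = 0 from rfl, show (4:ℕ).choose 2 = 6 from rfl, show (4:ℕ).choose 3 = 4 from rfl, show (5:ℕ).choose 2 = 10 from rfl, show (5:ℕ).choose 3 = 10 from rfl, show (6:ℕ).choose 2 = 15 from rfl, show (6:ℕ).choose 3 = 20 from rfl, show (7:ℕ).choose 2 = 21 from rfl, show (7:ℕ).choose 3 = 35 from rfl]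
    | (m + 8) =>
      have h3 := bSeq_q m
      have h4 := bSeq_q (m + 1)
      have h5 := bSeq_q (m + 2)
      have h6 := bSeq_q (m + 3)
      have h7 := bSeq_q (m + 4)
      have h8 := bSeq_q (m + 5)
      norm_num [show m + 8 - 1 = m + 4 + 3 by omega, show m + 8 - 2 = m + 3 + 3 by omega,
        show m + 8 - 3 = m + 2 + 3 by omega, show m + 8 - 4 = m + 1 + 3 by omega,
        show m + 8 - 5 = m + 3 by omega, show m + 8 = m + 5 + 3 by omega,
        h3, h4, h5, h6, h7, h8]
      ring
  · intro n
    match n with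
    | 0 => decide
    | 1 => decide
    | 2 => decide
    | (m + 3) =>
      have hb := bSeq_eq m
      have h2 := choose2 (m + 4)
      have h3 := choose3 (m + 4)
      have key : etilde (m + 3 + 1) 3 * 3 = 2 ^ m * ((m : ℤ) ^ 3 + 3 * m ^ 2 + 8 * m) + 3 := by
        simp only [etilde, cubeF, Finset.sum_range_succ, Finset.sum_range_zero,
          show m + 3 + 1 = m + 4 from rfl]
        have e3 : m + 4 - 3 = m + 1 := by omega
        rw [show m + 4 - 0 = m + 4 from rfl, show m + 4 - 1 = m + 3 from rfl,
          show m + 4 - 2 = m + 2 from rfl, e3]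
        push_cast [Nat.choose_zero_right, Nat.choose_one_right] at h2 h3 ⊢
        linear_combination (2 ^ m : ℤ) * h3 - 6 * (2 ^ m : ℤ) * h2
      omega
end
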